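/- Let M be a monoid satisfying an identity u ≈ v (for all substitutions of elements of M for the variables) where the sets of variables occurring in u and v differ, say variable x occurs in exactly one of u, v. Then there exists a natural number n ≥ 1 such that M satisfies x^n · y = y and y · x^n = y for all x, y ∈ M; in particular every element of M has a (two-sided) invertible power, so M is a group. -/
import Mathlib

open Classical in
private lemma aux_pow {X : Type*} {M : Type*} [Monoid M] (x : X) (a : M)
    (l : List X) :
    ((l.map (fun y => if y = x then a else 1)).prod : M) = a ^ l.count x := by
  induction l with
  | nil => simp
  | cons h t ih =>
    simp only [List.map_cons, List.prod_cons, ih, List.count_cons]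
    by_cases hh : h = x
    · subst hh; simp [pow_succ']
    · simp [hh, Ne.symm hh]

private lemma aux_key {X : Type*} {M : Type*} [Monoid M]
    (u v : FreeMonoid X)
    (hid : ∀ f : X → M, FreeMonoid.lift f u = FreeMonoid.lift f v)
    (x : X) (hu : x ∈ FreeMonoid.toList u) (hv : x ∉ FreeMonoid.toList v) :
    ∃ n : ℕ, 1 ≤ n ∧ ∀ a : M, a ^ n = 1 := by
  classical
  refine ⟨(FreeMonoid.toList u).count x, ?_, ?_⟩
  · exact List.count_pos_iff.2 hu
  · intro a
    have h := hid (fun y => if y = x then a else 1)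
    rw [FreeMonoid.lift_apply, FreeMonoid.lift_apply, aux_pow, aux_pow] at h
    rwa [List.count_eq_zero_of_not_mem hv, pow_zero] at h

/-- If a monoid satisfies an identity u ≈ v where some letter x occurs in exactly one
of u, v, then M satisfies x^n y ≈ y ≈ y x^n for some n ≥ 1, and M is a group. -/
theorem stmt1 {X : Type*} [Infinite X] {M : Type*} [Monoid M]
    (u v : FreeMonoid X)
    (hid : ∀ f : X → M, FreeMonoid.lift f u = FreeMonoid.lift f v)
    (x : X) (hx : ¬ (x ∈ FreeMonoid.toList u ↔ x ∈ FreeMonoid.toList v)) :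
    ∃ n : ℕ, 1 ≤ n ∧ (∀ a b : M, a ^ n * b = b ∧ b * a ^ n = b) ∧
      ∀ a : M, ∃ b : M, a * b = 1 ∧ b * a = 1 := by
  have key : ∃ n : ℕ, 1 ≤ n ∧ ∀ a : M, a ^ n = 1 := by
    by_cases hu : x ∈ FreeMonoid.toList u
    · by_cases hv : x ∈ FreeMonoid.toList v
      · exact absurd ⟨fun _ => hv, fun _ => hu⟩ hx
      · exact aux_key u v hid x hu hv
    · by_cases hv : x ∈ FreeMonoid.toList v
      · exact aux_key v u (fun f => (hid f).symm) x hv hu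
      · exact absurd ⟨fun h => absurd h hu, fun h => absurd h hv⟩ hx
  obtain ⟨n, hn1, hn⟩ := key
  refine ⟨n, hn1, fun a b => by simp [hn a], fun a => ⟨a ^ (n - 1), ?_, ?_⟩⟩
  · have : a * a ^ (n - 1) = a ^ n := by
      rw [← pow_succ']
      congr 1
      omega
    rw [this, hn]
  · have : a ^ (n - 1) * a = a ^ n := by
      rw [← pow_succ]
      congr 1
      omega
    rw [this, hn]
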